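/- Let m and N be positive integers, let σ ∈ S_m be the standard long cycle, and let α ∈ S_m be any permutation. Then the trace of the N×N complex matrix ∑_{i : {1,…,m} → {1,…,N}} E_{i(1), i(α(1))} · E_{i(2), i(α(2))} ⋯ E_{i(m), i(α(m))} (the matrix product taken in the order k = 1, …, m) equals N^{c(σ⁻¹α)}, where c(σ⁻¹α) is the number of orbits of the permutation σ⁻¹·α on {1,…,m}. (In the paper's language: the value of the universal gl-weight system on α in the standard representation is N^{f(α)−1}, where f(α) = c(σ⁻¹α) is the number of faces of the hypermap of α.) -/

import Mathlib

open scoped BigOperators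

/-- The matrix unit `E i j`: the `N × N` complex matrix with a `1` in position `(i, j)`. -/
noncomputable def glE (N : ℕ) (i j : Fin N) : Matrix (Fin N) (Fin N) ℂ :=
  Matrix.single i j 1

/-- The setoid on `Fin m` whose classes are the orbits of a permutation `β`. -/
def orbitSetoid {m : ℕ} (β : Equiv.Perm (Fin m)) : Setoid (Fin m) :=
  ⟨β.SameCycle,
    ⟨fun x => Equiv.Perm.SameCycle.refl β x, fun h => h.symm, fun h h' => h.trans h'⟩⟩

/-- `c(β)`: the number of orbits of the permutation `β` on `{1, …, m}`
(fixed points counting as orbits of size one). -/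
noncomputable def numOrbits {m : ℕ} (β : Equiv.Perm (Fin m)) : ℕ :=
  Nat.card (Quotient (orbitSetoid β))

open Classical in
/-- Product of a nonempty list of matrix units. -/
lemma glE_list_prod (N : ℕ) :
    ∀ (L : List (Fin N × Fin N)) (h : L ≠ []),
    (L.map fun p => glE N p.1 p.2).prod =
      if L.Chain' (fun p q => p.2 = q.1)
      then glE N (L.head h).1 (L.getLast h).2 else 0 := by
  intro L
  induction L with
  | nil => intro h; simp at h
  | cons p t ih =>
    intro h
    cases t with
    | nil => simp [List.Chain']
    | cons q t =>
      rw [List.map_cons, List.prod_cons, ih (by simp)]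
      by_cases h1 : p.2 = q.1
      · by_cases h2 : List.Chain' (fun p q : Fin N × Fin N => p.2 = q.1) (q :: t)
        · rw [if_pos h2, if_pos (show List.Chain' (fun p q : Fin N × Fin N => p.2 = q.1)
              (p :: q :: t) from List.isChain_cons_cons.2 ⟨h1, h2⟩)]
          simp only [List.head_cons, List.getLast_cons_cons]
          rw [glE, glE, glE, h1, Matrix.single_mul_single_same, one_mul]
        · rw [if_neg h2, if_neg (fun hc : List.Chain' (fun p q : Fin N × Fin N => p.2 = q.1)
              (p :: q :: t) => h2 (List.isChain_cons_cons.1 hc).2), mul_zero]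
      · rw [if_neg (fun hc : List.Chain' (fun p q : Fin N × Fin N => p.2 = q.1)
              (p :: q :: t) => h1 (List.isChain_cons_cons.1 hc).1)]
        by_cases h2 : List.Chain' (fun p q : Fin N × Fin N => p.2 = q.1) (q :: t)
        · rw [if_pos h2]
          simp only [List.head_cons, glE]
          exact Matrix.single_mul_single_of_ne _ _ _ _ h1 _
        · rw [if_neg h2, mul_zero]

lemma cond_iff_const {m N : ℕ} (α : Equiv.Perm (Fin (m + 1))) (i : Fin (m + 1) → Fin N) :
    (∀ k, i (α k) = i (finRotate (m + 1) k)) ↔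
      (∀ x y, ((finRotate (m + 1))⁻¹ * α).SameCycle x y →
        (i ∘ finRotate (m + 1)) x = (i ∘ finRotate (m + 1)) y) := by
  set σ := finRotate (m + 1)
  set β := σ⁻¹ * α with hβ
  constructor
  · intro h
    have hstep : ∀ x, (i ∘ σ) (β x) = (i ∘ σ) x := by
      intro x
      have hσβ : σ (β x) = α x := by simp [hβ]
      simp only [Function.comp_apply, hσβ]
      exact h x
    have hinv : ∀ x, (i ∘ σ) (β⁻¹ x) = (i ∘ σ) x := by
      intro x
      conv_rhs => rw [← Equiv.apply_symm_apply β x]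
      exact (hstep (β⁻¹ x)).symm
    have hpow : ∀ (n : ℤ) (x : Fin (m + 1)), (i ∘ σ) ((β ^ n) x) = (i ∘ σ) x := by
      intro n
      induction n using Int.induction_on with
      | zero => intro x; simp
      | succ n ihn =>
        intro x
        have hx : (β ^ ((n : ℤ) + 1)) x = (β ^ (n : ℤ)) (β x) := by
          rw [zpow_add_one, Equiv.Perm.mul_apply]
        rw [hx, ihn, hstep]
      | pred n ihn =>
        intro x
        have hx : (β ^ (-(n : ℤ) - 1)) x = (β ^ (-(n : ℤ))) (β⁻¹ x) := by
          rw [zpow_sub_one, Equiv.Perm.mul_apply]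
        rw [hx, ihn, hinv]
    rintro x y ⟨n, rfl⟩
    exact (hpow n x).symm
  · intro h k
    have h1 : (i ∘ σ) (β k) = (i ∘ σ) k := (h (β k) k ⟨-1, by simp⟩)
    have hσβ : σ (β k) = α k := by simp [hβ]
    simpa only [Function.comp_apply, hσβ] using h1

/-- Subtype of functions constant on orbits is equivalent to functions on the quotient. -/
def constEquiv {m N : ℕ} (β : Equiv.Perm (Fin m)) :
    {j : Fin m → Fin N // ∀ x y, β.SameCycle x y → j x = j y} ≃
      (Quotient (orbitSetoid β) → Fin N) where
  toFun j := Quotient.lift j.1 (fun a b h => j.2 a b h)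
  invFun g := ⟨fun x => g (Quotient.mk (orbitSetoid β) x),
    fun a b h => congrArg g (Quotient.sound h)⟩
  left_inv j := rfl
  right_inv g := by
    funext q
    induction q using Quotient.ind
    rfl

set_option maxHeartbeats 1000000 in
theorem trace_wgl_standard (m N : ℕ) (hm : 0 < m) (hN : 0 < N) (α : Equiv.Perm (Fin m)) :
    Matrix.trace
        (∑ i : Fin m → Fin N,
          ((List.finRange m).map fun k => glE N (i k) (i (α k))).prod)
      = (N : ℂ) ^ numOrbits ((finRotate m)⁻¹ * α) := by
  classical
  obtain ⟨m, rfl⟩ := Nat.exists_eq_succ_of_ne_zero hm.ne'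
  set σ := finRotate (m + 1) with hσ
  set β := σ⁻¹ * α with hβ
  set Cond : (Fin (m + 1) → Fin N) → Prop := fun i => ∀ k, i (α k) = i (σ k) with hCond
  -- Step 1: compute the trace of each summand
  have htr : ∀ i : Fin (m + 1) → Fin N,
      Matrix.trace (((List.finRange (m + 1)).map fun k => glE N (i k) (i (α k))).prod)
        = if Cond i then 1 else 0 := by
    intro i
    have hne : ((List.finRange (m + 1)).map fun k => (i k, i (α k))) ≠ [] := by
      simp [List.finRange_succ]
    have hmap : ((List.finRange (m + 1)).map fun k => glE N (i k) (i (α k)))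
        = (((List.finRange (m + 1)).map fun k => (i k, i (α k))).map
            fun p => glE N p.1 p.2) := by
      rw [List.map_map]
      rfl
    rw [hmap, glE_list_prod N _ hne]
    -- head and last
    have hlen : ((List.finRange (m + 1)).map fun k => (i k, i (α k))).length = m + 1 := by
      simp
    have hget : ∀ (n : ℕ) (h : n < m + 1),
        (((List.finRange (m + 1)).map fun k => (i k, i (α k)))[n]'(by simpa using h))
          = (i ⟨n, h⟩, i (α ⟨n, h⟩)) := by
      intro n h
      simp
    have hhead : (((List.finRange (m + 1)).map fun k => (i k, i (α k))).head hne)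
        = (i 0, i (α 0)) := by
      rw [List.head_eq_getElem_zero, hget 0 (by omega)]
      rfl
    have hlast : (((List.finRange (m + 1)).map fun k => (i k, i (α k))).getLast hne)
        = (i (Fin.last m), i (α (Fin.last m))) := by
      rw [List.getLast_eq_getElem]
      simp only [hlen, Nat.add_sub_cancel]
      rw [hget m (by omega)]
      rfl
    -- chain condition
    have hchain : (((List.finRange (m + 1)).map fun k => (i k, i (α k))).Chain'
          fun p q => p.2 = q.1)
        ↔ ∀ (n : ℕ) (h : n < m), i (α ⟨n, by omega⟩) = i ⟨n + 1, by omega⟩ := by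
      rw [List.Chain', List.isChain_iff_getElem]
      constructor
      · intro h n hn
        have := h n (by rw [hlen]; omega)
        rwa [hget n (by omega), hget (n + 1) (by omega)] at this
      · intro h n hn
        rw [hlen] at hn
        rw [hget n (by omega), hget (n + 1) (by omega)]
        exact h n (by omega)
    -- now split on Cond
    by_cases hc : Cond i
    · have hch : (((List.finRange (m + 1)).map fun k => (i k, i (α k))).Chain'
          fun p q => p.2 = q.1) := by
        rw [hchain]
        intro n hn
        have := hc ⟨n, by omega⟩
        rw [hσ, finRotate_succ_apply] at this
        have hval : ((⟨n, by omega⟩ : Fin (m + 1)) + 1) = (⟨n + 1, by omega⟩ : Fin (m + 1)) := by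
          apply Fin.ext
          rw [Fin.val_add_one_of_lt]
          exact Fin.lt_last_iff_ne_last.mpr (by simp [Fin.ext_iff]; omega)
        rwa [hval] at this
      rw [if_pos hch, if_pos hc, hhead, hlast]
      have hlastcond : i (α (Fin.last m)) = i 0 := by
        have := hc (Fin.last m)
        rwa [hσ, finRotate_succ_apply, Fin.last_add_one] at this
      show Matrix.trace (Matrix.single (i 0) (i (α (Fin.last m))) (1 : ℂ)) = 1
      rw [hlastcond, Matrix.trace_single_eq_same]
    · rw [if_neg hc]
      by_cases hch : (((List.finRange (m + 1)).map fun k => (i k, i (α k))).Chain'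
          fun p q => p.2 = q.1)
      · -- chain holds but Cond fails, so the last condition fails
        rw [if_pos hch, hhead, hlast]
        have hlast0 : i (α (Fin.last m)) ≠ i 0 := by
          intro heq
          apply hc
          intro k
          rw [hσ, finRotate_succ_apply]
          by_cases hk : k = Fin.last m
          · rw [hk, Fin.last_add_one, heq]
          · have hklt : (k : ℕ) < m := by
              rcases Fin.lt_last_iff_ne_last.mpr hk with h
              exact h
            have := (hchain.1 hch) k hklt
            have hval : (k + 1) = (⟨(k : ℕ) + 1, by omega⟩ : Fin (m + 1)) := by
              apply Fin.ext
              rw [Fin.val_add_one_of_lt]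
              exact Fin.lt_last_iff_ne_last.mpr hk
            rw [hval]
            have hk' : (⟨(k : ℕ), by omega⟩ : Fin (m + 1)) = k := by
              apply Fin.ext; rfl
            rw [hk'] at this
            exact this
        show Matrix.trace (Matrix.single (i 0) (i (α (Fin.last m))) (1 : ℂ)) = 0
        exact Matrix.trace_single_eq_of_ne _ _ _ hlast0.symm
      · rw [if_neg hch, Matrix.trace_zero]
  -- Step 2: sum the traces
  rw [Matrix.trace_sum]
  simp_rw [htr]
  rw [Finset.sum_boole]
  -- Step 3: count
  have hcount : (Finset.filter Cond Finset.univ).card = N ^ numOrbits β := by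
    have h1 : (Finset.filter Cond Finset.univ).card = Nat.card {i // Cond i} := by
      rw [Nat.card_eq_fintype_card, Fintype.card_subtype]
    rw [h1]
    have e1 : {i // Cond i} ≃
        {j : Fin (m + 1) → Fin N // ∀ x y, β.SameCycle x y → j x = j y} := by
      refine Equiv.subtypeEquiv (Equiv.arrowCongr (Equiv.symm σ) (Equiv.refl _)) ?_
      intro i
      have : (Equiv.arrowCongr (Equiv.symm σ) (Equiv.refl (Fin N))) i = i ∘ σ := by
        funext x; rfl
      rw [this, hCond]
      exact cond_iff_const α i
    have e2 := (constEquiv (N := N) β)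
    rw [Nat.card_congr (e1.trans e2), Nat.card_fun, Nat.card_eq_fintype_card,
      Fintype.card_fin, numOrbits]
  rw [hcount]
  push_cast
  rfl
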